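/- For each a ∈ ℕ^m and all n ≥ |a| := ∑_j a_j, the restriction map induces an isomorphism A_R(n,m,a)^{S_n} ≅ A_R(|a|,m,a)^{S_{|a|}}; in other words, the multidegree-a multisymmetric functions stabilize for n ≥ |a|. -/

import Mathlib

open MvPolynomial Finset
open scoped Classical

noncomputable section

variable {R : Type*} [CommRing R]

/-- f(j): substitution y_i ↦ x_i(j). -/
def subst (m n : ℕ) (f : MvPolynomial (Fin m) R) (j : Fin n) :
    MvPolynomial (Fin m × Fin n) R :=
  rename (fun i => (i, j)) f

/-- the action of σ ∈ Sₙ on A_R(n,m). -/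
def permRename (m n : ℕ) (σ : Equiv.Perm (Fin n)) :
    MvPolynomial (Fin m × Fin n) R →ₐ[R] MvPolynomial (Fin m × Fin n) R :=
  rename (fun q => (q.1, σ q.2))

/-- invariant submodule A_R(n,m)^{Sₙ}. -/
def invSub (R : Type*) [CommRing R] (m n : ℕ) :
    Submodule R (MvPolynomial (Fin m × Fin n) R) where
  carrier := {p | ∀ σ : Equiv.Perm (Fin n), permRename m n σ p = p}
  add_mem' := fun ha hb σ => by simp [map_add, ha σ, hb σ]
  zero_mem' := fun σ => by simp
  smul_mem' := fun c p hp σ => by simp [map_smul, hp σ]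

/-- invariant subalgebra A_R(n,m)^{Sₙ}. -/
def invAlg (R : Type*) [CommRing R] (m n : ℕ) :
    Subalgebra R (MvPolynomial (Fin m × Fin n) R) where
  carrier := {p | ∀ σ : Equiv.Perm (Fin n), permRename m n σ p = p}
  add_mem' := fun ha hb σ => by simp [map_add, ha σ, hb σ]
  mul_mem' := fun ha hb σ => by simp [map_mul, ha σ, hb σ]
  algebraMap_mem' := fun r σ => by simp [permRename]

/-- e_α(f): coefficient of t^α in ∏ᵢ (1 + ∑ₕ tₕ fₕ(i)). -/
def eAlpha (m n : ℕ) {ι : Type*} [Fintype ι] (f : ι → MvPolynomial (Fin m) R) (α : ι → ℕ) :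
    MvPolynomial (Fin m × Fin n) R :=
  coeff (Finsupp.equivFunOnFinite.symm α)
    (∏ i : Fin n, (1 + ∑ h : ι, X h * C (subst m n (f h) i)))

/-- k-th elementary symmetric polynomial evaluated at v(1),…,v(n). -/
def esymVal {S : Type*} [CommRing S] (n : ℕ) (v : Fin n → S) (k : ℕ) : S :=
  ∑ A ∈ Finset.powersetCard k (Finset.univ : Finset (Fin n)), ∏ j ∈ A, v j

/-- multidegree of a monomial exponent. -/
def wdeg (m n : ℕ) (d : Fin m × Fin n →₀ ℕ) : Fin m → ℕ := fun i => ∑ j : Fin n, d (i, j)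

/-- multidegree-a component of A_R(n,m). -/
def comp (R : Type*) [CommRing R] (m n : ℕ) (a : Fin m → ℕ) :
    Submodule R (MvPolynomial (Fin m × Fin n) R) where
  carrier := {p | ∀ d ∈ p.support, wdeg m n d = a}
  add_mem' := fun ha hb d hd => by
    rcases Finset.mem_union.1 (MvPolynomial.support_add hd) with h | h
    · exact ha d h
    · exact hb d h
  zero_mem' := fun d hd => by simp at hd
  smul_mem' := fun c p hp d hd => hp d (MvPolynomial.support_smul hd)

/-- the restriction map πₙ₊₁ : A_R(n+1,m) → A_R(n,m), x_i(n+1) ↦ 0. -/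
def projDown (R : Type*) [CommRing R] (m n : ℕ) :
    MvPolynomial (Fin m × Fin (n+1)) R →ₐ[R] MvPolynomial (Fin m × Fin n) R :=
  aeval (fun p : Fin m × Fin (n+1) =>
    if h : (p.2 : ℕ) < n then X (p.1, ⟨p.2, h⟩) else 0)

/-- e_α for finitely supported α : M_m⁺ → ℕ. -/
def eAlphaM (R : Type*) [CommRing R] (m n : ℕ) (α : {d : Fin m →₀ ℕ // d ≠ 0} →₀ ℕ) :
    MvPolynomial (Fin m × Fin n) R :=
  eAlpha m n (fun l => monomial ((α.support.equivFin.symm l) : {d : Fin m →₀ ℕ // d ≠ 0}).1 (1 : R))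
    (fun l => α (α.support.equivFin.symm l))

/-- a monomial of positive degree is primitive if it is not a proper power. -/
def Primitive (m : ℕ) (d : Fin m →₀ ℕ) : Prop :=
  d ≠ 0 ∧ ∀ (e : Fin m →₀ ℕ) (k : ℕ), 2 ≤ k → d ≠ k • e

namespace Stmt18Aux

variable {R : Type*} [CommRing R] {m n N : ℕ}

/-- the permutation of variables induced by σ. -/
def pEquiv (m : ℕ) {n : ℕ} (σ : Equiv.Perm (Fin n)) : (Fin m × Fin n) ≃ (Fin m × Fin n) :=
  (Equiv.refl (Fin m)).prodCongr σ

/-- the action of σ on exponents. -/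
def act {m n : ℕ} (σ : Equiv.Perm (Fin n)) (d : Fin m × Fin n →₀ ℕ) : Fin m × Fin n →₀ ℕ :=
  Finsupp.equivMapDomain (pEquiv m σ) d

lemma act_apply (σ : Equiv.Perm (Fin n)) (d : Fin m × Fin n →₀ ℕ) (i : Fin m) (j : Fin n) :
    act σ d (i, j) = d (i, σ⁻¹ j) := rfl

lemma act_act (τ σ : Equiv.Perm (Fin n)) (d : Fin m × Fin n →₀ ℕ) :
    act τ (act σ d) = act (τ * σ) d := by
  ext ⟨i, j⟩
  simp [act_apply, Equiv.Perm.mul_apply]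

lemma act_one (d : Fin m × Fin n →₀ ℕ) : act (1 : Equiv.Perm (Fin n)) d = d := by
  ext ⟨i, j⟩; simp [act_apply]

lemma pEquiv_coe (σ : Equiv.Perm (Fin n)) :
    ⇑(pEquiv m σ) = fun q : Fin m × Fin n => (q.1, σ q.2) := rfl

lemma act_eq_mapDomain (σ : Equiv.Perm (Fin n)) (d : Fin m × Fin n →₀ ℕ) :
    act σ d = Finsupp.mapDomain (fun q : Fin m × Fin n => (q.1, σ q.2)) d := by
  rw [act, Finsupp.equivMapDomain_eq_mapDomain, pEquiv_coe]

lemma coeff_act_permRename (σ : Equiv.Perm (Fin n)) (d : Fin m × Fin n →₀ ℕ)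
    (p : MvPolynomial (Fin m × Fin n) R) :
    coeff (act σ d) (permRename m n σ p) = coeff d p := by
  rw [act_eq_mapDomain, permRename]
  exact coeff_rename_mapDomain _ (fun x y h => by
    simp only [Prod.mk.injEq] at h
    exact Prod.ext h.1 (σ.injective h.2)) p d

lemma coeff_invariant {p : MvPolynomial (Fin m × Fin n) R} (hp : p ∈ invSub R m n)
    (σ : Equiv.Perm (Fin n)) (d : Fin m × Fin n →₀ ℕ) :
    coeff (act σ d) p = coeff d p := by
  conv_lhs => rw [← hp σ]
  exact coeff_act_permRename σ d p

lemma wdeg_act (σ : Equiv.Perm (Fin n)) (d : Fin m × Fin n →₀ ℕ) :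
    wdeg m n (act σ d) = wdeg m n d := by
  funext i
  show ∑ j : Fin n, act σ d (i, j) = ∑ j : Fin n, d (i, j)
  rw [Fintype.sum_equiv σ⁻¹ _ (fun j => d (i, j))]
  intro j
  rw [act_apply]

/-- the embedding of variables for N ≤ n. -/
def emb (m : ℕ) {N n : ℕ} (hn : N ≤ n) : Fin m × Fin N → Fin m × Fin n :=
  fun x => (x.1, Fin.castLE hn x.2)

lemma emb_inj (hn : N ≤ n) : Function.Injective (emb m hn) := by
  intro x y h
  simp only [emb, Prod.mk.injEq] at h
  exact Prod.ext h.1 (Fin.castLE_injective hn h.2)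

lemma mapDomain_emb_castLE (hn : N ≤ n) (d : Fin m × Fin N →₀ ℕ) (i : Fin m) (j : Fin N) :
    Finsupp.mapDomain (emb m hn) d (i, Fin.castLE hn j) = d (i, j) :=
  Finsupp.mapDomain_apply (emb_inj hn) d (i, j)

lemma mapDomain_emb_apply (hn : N ≤ n) (d : Fin m × Fin N →₀ ℕ) (i : Fin m) (j : Fin n) :
    Finsupp.mapDomain (emb m hn) d (i, j) =
      if h : (j : ℕ) < N then d (i, ⟨j, h⟩) else 0 := by
  split_ifs with h
  · have : (i, j) = emb m hn (i, ⟨(j : ℕ), h⟩) := by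
      simp [emb, Fin.ext_iff]
    rw [this, Finsupp.mapDomain_apply (emb_inj hn)]
  · apply Finsupp.mapDomain_notin_range
    rintro ⟨⟨i', j'⟩, heq⟩
    have : (Fin.castLE hn j' : ℕ) = (j : ℕ) := congrArg (fun x : Fin m × Fin n => (x.2 : ℕ)) heq
    exact h (this ▸ j'.isLt)

lemma wdeg_mapDomain_emb (hn : N ≤ n) (d : Fin m × Fin N →₀ ℕ) :
    wdeg m n (Finsupp.mapDomain (emb m hn) d) = wdeg m N d := by
  funext i
  show ∑ j : Fin n, Finsupp.mapDomain (emb m hn) d (i, j) = ∑ j : Fin N, d (i, j)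
  rw [← Finset.sum_subset (Finset.subset_univ
    ((Finset.univ : Finset (Fin N)).map ⟨Fin.castLE hn, Fin.castLE_injective hn⟩))
    (by
      intro j _ hj
      rw [mapDomain_emb_apply]
      rw [Finset.mem_map] at hj
      push_neg at hj
      rw [dif_neg]
      intro hlt
      exact hj ⟨(j : ℕ), hlt⟩ (Finset.mem_univ _) (Fin.ext rfl))]
  rw [Finset.sum_map]
  apply Finset.sum_congr rfl
  intro j _
  exact mapDomain_emb_castLE hn d i j


/-- the projection killing variables with column ≥ N. -/
def projP (R : Type*) [CommRing R] (m n N : ℕ) :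
    MvPolynomial (Fin m × Fin n) R →ₐ[R] MvPolynomial (Fin m × Fin N) R :=
  aeval (fun q : Fin m × Fin n =>
    if h : (q.2 : ℕ) < N then X (q.1, ⟨q.2, h⟩) else 0)

lemma projP_rename (hn : N ≤ n) (p : MvPolynomial (Fin m × Fin N) R) :
    projP R m n N (rename (emb m hn) p) = p := by
  rw [projP, aeval_rename]
  have : (fun q : Fin m × Fin n =>
      if h : (q.2 : ℕ) < N then (X (q.1, ⟨q.2, h⟩) : MvPolynomial (Fin m × Fin N) R) else 0) ∘
      emb m hn = X := by
    funext x
    simp [Function.comp_apply, emb]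
  rw [this, aeval_X_left]
  rfl

lemma coeff_projP (hn : N ≤ n) (p : MvPolynomial (Fin m × Fin n) R) (d' : Fin m × Fin N →₀ ℕ) :
    coeff d' (projP R m n N p) = coeff (Finsupp.mapDomain (emb m hn) d') p := by
  induction p using MvPolynomial.induction_on' with
  | add p q hp hq => simp [map_add, coeff_add, hp, hq]
  | monomial e c =>
    by_cases hsm : ∀ x ∈ e.support, (x.2 : ℕ) < N
    · have hsub : ↑e.support ⊆ Set.range (emb m hn) := by
        rintro ⟨i, j⟩ hx
        exact ⟨(i, ⟨(j : ℕ), hsm _ hx⟩), Prod.ext rfl (Fin.ext rfl)⟩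
      set e₀ := Finsupp.comapDomain (emb m hn) e ((emb_inj hn).injOn)
      have he : Finsupp.mapDomain (emb m hn) e₀ = e :=
        Finsupp.mapDomain_comapDomain _ (emb_inj hn) e hsub
      have hmon : (monomial e c : MvPolynomial (Fin m × Fin n) R) =
          rename (emb m hn) (monomial e₀ c) := by
        rw [rename_monomial, he]
      rw [hmon, projP_rename hn, coeff_monomial, rename_monomial, coeff_monomial]
      simp only [Function.Injective.eq_iff (Finsupp.mapDomain_injective (emb_inj hn))]
    · push_neg at hsm
      obtain ⟨⟨xi, xj⟩, hxs, hx⟩ := hsm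
      have hx' : ¬ ((xj : ℕ) < N) := not_lt.2 hx
      have h1 : projP R m n N (monomial e c) = 0 := by
        rw [projP, aeval_monomial]
        rw [Finsupp.prod]
        rw [Finset.prod_eq_zero hxs]
        · ring
        · rw [dif_neg hx', zero_pow (Finsupp.mem_support_iff.1 hxs)]
      rw [h1, coeff_zero, coeff_monomial, if_neg]
      · intro hc
        have := Finsupp.mem_support_iff.1 hxs
        rw [hc] at this
        rw [mapDomain_emb_apply hn] at this
        rw [dif_neg hx'] at this
        exact this rfl

/-- the set of columns used by an exponent. -/
def cols {m n : ℕ} (d : Fin m × Fin n →₀ ℕ) : Finset (Fin n) := d.support.image Prod.snd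

lemma card_cols_le {a : Fin m → ℕ} {d : Fin m × Fin n →₀ ℕ} (hd : wdeg m n d = a) :
    (cols d).card ≤ ∑ i, a i := by
  calc (cols d).card = ∑ _j ∈ cols d, 1 := by rw [Finset.card_eq_sum_ones]
    _ ≤ ∑ j ∈ cols d, ∑ i, d (i, j) := by
        apply Finset.sum_le_sum
        intro j hj
        rw [cols, Finset.mem_image] at hj
        obtain ⟨⟨i, j'⟩, hx, rfl⟩ := hj
        calc 1 ≤ d (i, j') := Nat.one_le_iff_ne_zero.2 (Finsupp.mem_support_iff.1 hx)
          _ ≤ ∑ i', d (i', j') := Finset.single_le_sum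
              (f := fun i' => d (i', j')) (fun _ _ => Nat.zero_le _) (Finset.mem_univ i)
    _ ≤ ∑ j : Fin n, ∑ i, d (i, j) := Finset.sum_le_sum_of_subset (Finset.subset_univ _)
    _ = ∑ i, ∑ j : Fin n, d (i, j) := Finset.sum_comm
    _ = ∑ i, a i := by
        apply Finset.sum_congr rfl
        intro i _
        exact congrFun hd i

lemma exists_push (hn : N ≤ n) (s : Finset (Fin n)) (hs : s.card ≤ N) :
    ∃ σ : Equiv.Perm (Fin n), ∀ j ∈ s, ((σ j : Fin n) : ℕ) < N := by
  set T : Finset (Fin n) :=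
    (Finset.univ : Finset (Fin N)).map ⟨Fin.castLE hn, Fin.castLE_injective hn⟩ with hT
  have hTcard : T.card = N := by simp [hT]
  obtain ⟨t, htT, htc⟩ := Finset.exists_subset_card_eq (show s.card ≤ T.card by omega)
  have e : {x : Fin n // x ∈ s} ≃ {x : Fin n // x ∈ t} := Finset.equivOfCardEq htc.symm
  refine ⟨Equiv.extendSubtype e, ?_⟩
  intro j hj
  have hmem : Equiv.extendSubtype e j ∈ t := e.extendSubtype_mem j hj
  have := htT hmem
  rw [hT, Finset.mem_map] at this
  obtain ⟨k, _, hk⟩ := this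
  rw [← hk]
  exact k.isLt


lemma keyA (hn : N ≤ n) (d d' : Fin m × Fin N →₀ ℕ) (σ : Equiv.Perm (Fin n))
    (h : act σ (Finsupp.mapDomain (emb m hn) d) = Finsupp.mapDomain (emb m hn) d') :
    ∃ τ : Equiv.Perm (Fin N), act τ d = d' := by
  have hpt : ∀ (i : Fin m) (j : Fin n),
      Finsupp.mapDomain (emb m hn) d (i, j) = Finsupp.mapDomain (emb m hn) d' (i, σ j) := by
    intro i j
    have h2 := congrArg (fun l : Fin m × Fin n →₀ ℕ => l (i, σ j)) h
    simpa [act_apply] using h2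
  have hsm : ∀ j : Fin N, (∃ i, d (i, j) ≠ 0) → ((σ (Fin.castLE hn j) : Fin n) : ℕ) < N := by
    rintro j ⟨i, hi⟩
    have h1 : Finsupp.mapDomain (emb m hn) d' (i, σ (Fin.castLE hn j)) ≠ 0 := by
      rw [← hpt i (Fin.castLE hn j), mapDomain_emb_castLE]
      exact hi
    by_contra hlt
    rw [mapDomain_emb_apply hn, dif_neg hlt] at h1
    exact h1 rfl
  have key2 : ∀ (i : Fin m) (j : Fin N) (hlt : ((σ (Fin.castLE hn j) : Fin n) : ℕ) < N),
      d' (i, ⟨(σ (Fin.castLE hn j) : Fin n), hlt⟩) = d (i, j) := by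
    intro i j hlt
    have h1 : Finsupp.mapDomain (emb m hn) d' (i, σ (Fin.castLE hn j)) =
        d' (i, ⟨(σ (Fin.castLE hn j) : Fin n), hlt⟩) := by
      rw [mapDomain_emb_apply hn, dif_pos hlt]
    rw [← h1, ← hpt i (Fin.castLE hn j), mapDomain_emb_castLE]
  set P : Fin N → Prop := fun j => ∃ i, d (i, j) ≠ 0 with hP
  set Q : Fin N → Prop := fun j => ∃ i, d' (i, j) ≠ 0 with hQ
  let g : {j : Fin N // P j} → {j : Fin N // Q j} := fun jp =>
    ⟨⟨(σ (Fin.castLE hn jp.1) : Fin n), hsm jp.1 jp.2⟩, by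
      obtain ⟨i, hi⟩ := jp.2
      exact ⟨i, by rw [key2 i jp.1 (hsm jp.1 jp.2)]; exact hi⟩⟩
  have hgval : ∀ jp : {j : Fin N // P j},
      ((g jp : Fin N) : ℕ) = ((σ (Fin.castLE hn jp.1) : Fin n) : ℕ) := fun _ => rfl
  have hbij : Function.Bijective g := by
    constructor
    · intro x y hxy
      have : ((σ (Fin.castLE hn x.1) : Fin n) : ℕ) = ((σ (Fin.castLE hn y.1) : Fin n) : ℕ) := by
        rw [← hgval x, ← hgval y, hxy]
      have h2 : σ (Fin.castLE hn x.1) = σ (Fin.castLE hn y.1) := Fin.ext this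
      have h3 := Fin.castLE_injective hn (σ.injective h2)
      exact Subtype.ext h3
    · rintro ⟨j', ⟨i, hi⟩⟩
      have h1 : Finsupp.mapDomain (emb m hn) d (i, σ⁻¹ (Fin.castLE hn j')) ≠ 0 := by
        rw [hpt i (σ⁻¹ (Fin.castLE hn j'))]
        simp only [Equiv.Perm.coe_inv, Equiv.apply_symm_apply]
        rw [mapDomain_emb_castLE]
        exact hi
      have hx : ((σ⁻¹ (Fin.castLE hn j') : Fin n) : ℕ) < N := by
        by_contra hlt
        rw [mapDomain_emb_apply hn, dif_neg hlt] at h1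
        exact h1 rfl
      set j₀ : Fin N := ⟨(σ⁻¹ (Fin.castLE hn j') : Fin n), hx⟩ with hj₀
      have hcast : Fin.castLE hn j₀ = σ⁻¹ (Fin.castLE hn j') := Fin.ext rfl
      have hPj₀ : P j₀ := by
        refine ⟨i, ?_⟩
        rw [← mapDomain_emb_castLE hn d i j₀, hcast]
        exact h1
      refine ⟨⟨j₀, hPj₀⟩, ?_⟩
      apply Subtype.ext
      apply Fin.ext
      rw [hgval]
      simp only [hcast, Equiv.Perm.coe_inv, Equiv.apply_symm_apply]
      rfl
  set τ : Equiv.Perm (Fin N) := Equiv.extendSubtype (Equiv.ofBijective g hbij) with hτ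
  have claim : ∀ (i : Fin m) (j : Fin N), d' (i, τ j) = d (i, j) := by
    intro i j
    by_cases hj : P j
    · have h1 : τ j = (g ⟨j, hj⟩ : Fin N) := by
        rw [hτ, Equiv.extendSubtype_apply_of_mem (Equiv.ofBijective g hbij) j hj]
        rfl
      rw [h1]
      have h2 : (g ⟨j, hj⟩ : Fin N) = ⟨(σ (Fin.castLE hn j) : Fin n), hsm j hj⟩ := rfl
      rw [h2, key2 i j (hsm j hj)]
    · have h0 : ∀ i', d (i', j) = 0 := by
        by_contra hc
        push_neg at hc
        exact hj hc
      have hq : ¬ Q (τ j) := by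
        intro hQτ
        obtain ⟨⟨j₀, hj₀⟩, hg⟩ := hbij.2 ⟨τ j, hQτ⟩
        have h1 : τ j₀ = τ j := by
          rw [hτ, Equiv.extendSubtype_apply_of_mem (Equiv.ofBijective g hbij) j₀ hj₀]
          exact congrArg Subtype.val hg
        have h2 : j₀ = j := τ.injective h1
        rw [h2] at hj₀
        exact hj hj₀
      have h0' : ∀ i', d' (i', τ j) = 0 := by
        by_contra hc
        push_neg at hc
        exact hq hc
      rw [h0' i, h0 i]
  refine ⟨τ, ?_⟩
  ext ⟨i, j'⟩
  rw [act_apply]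
  have := claim i (τ⁻¹ j')
  rw [Equiv.Perm.coe_inv, Equiv.apply_symm_apply] at this
  exact this.symm

/-- Fin N as the subtype of small elements of Fin n. -/
def finEquivSub (hn : N ≤ n) : Fin N ≃ {j : Fin n // (j : ℕ) < N} where
  toFun k := ⟨Fin.castLE hn k, k.isLt⟩
  invFun j := ⟨(j : Fin n), j.2⟩
  left_inv k := rfl
  right_inv j := rfl

lemma act_extendDomain (hn : N ≤ n) (τ : Equiv.Perm (Fin N)) (d : Fin m × Fin N →₀ ℕ) :
    act (τ.extendDomain (finEquivSub hn)) (Finsupp.mapDomain (emb m hn) d) =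
      Finsupp.mapDomain (emb m hn) (act τ d) := by
  have hinv : (τ.extendDomain (finEquivSub hn))⁻¹ = τ⁻¹.extendDomain (finEquivSub hn) := by
    rfl
  ext ⟨i, j⟩
  rw [act_apply]
  by_cases h : (j : ℕ) < N
  · have h2 : (τ.extendDomain (finEquivSub hn))⁻¹ j = Fin.castLE hn (τ⁻¹ ⟨(j : ℕ), h⟩) := by
      rw [hinv, Equiv.Perm.extendDomain_apply_subtype _ (finEquivSub hn) h]
      rfl
    rw [h2, mapDomain_emb_castLE, mapDomain_emb_apply hn, dif_pos h, act_apply]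
  · have h2 : (τ.extendDomain (finEquivSub hn))⁻¹ j = j := by
      rw [hinv, Equiv.Perm.extendDomain_apply_not_subtype _ (finEquivSub hn) h]
    rw [h2, mapDomain_emb_apply hn, dif_neg h, mapDomain_emb_apply hn, dif_neg h]


/-- the orbit of an exponent under the symmetric group. -/
def orb {m n : ℕ} (d : Fin m × Fin n →₀ ℕ) : Finset (Fin m × Fin n →₀ ℕ) :=
  Finset.image (fun σ : Equiv.Perm (Fin n) => act σ d) Finset.univ

lemma mem_orb {d e : Fin m × Fin n →₀ ℕ} : e ∈ orb d ↔ ∃ σ, act σ d = e := by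
  simp [orb]

lemma self_mem_orb (d : Fin m × Fin n →₀ ℕ) : d ∈ orb d :=
  mem_orb.2 ⟨1, act_one d⟩

lemma act_injective (τ : Equiv.Perm (Fin n)) :
    Function.Injective (act τ : (Fin m × Fin n →₀ ℕ) → _) := by
  intro x y h
  have := congrArg (act τ⁻¹) h
  rwa [act_act, act_act, inv_mul_cancel, act_one, act_one] at this

lemma orb_image (τ : Equiv.Perm (Fin n)) (d : Fin m × Fin n →₀ ℕ) :
    Finset.image (act τ) (orb d) = orb d := by
  ext e
  simp only [Finset.mem_image, mem_orb]
  constructor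
  · rintro ⟨e', ⟨σ, rfl⟩, rfl⟩
    exact ⟨τ * σ, (act_act τ σ d).symm⟩
  · rintro ⟨σ, rfl⟩
    exact ⟨act (τ⁻¹ * σ) d, ⟨τ⁻¹ * σ, rfl⟩, by rw [act_act]; group⟩

lemma orb_act (τ : Equiv.Perm (Fin n)) (d : Fin m × Fin n →₀ ℕ) :
    orb (act τ d) = orb d := by
  ext e
  simp only [mem_orb]
  constructor
  · rintro ⟨σ, rfl⟩
    exact ⟨σ * τ, by rw [← act_act]⟩
  · rintro ⟨σ, rfl⟩
    exact ⟨σ * τ⁻¹, by rw [act_act]; group⟩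

/-- the orbit sum of an exponent. -/
def osum (R : Type*) [CommRing R] {m n : ℕ} (d : Fin m × Fin n →₀ ℕ) :
    MvPolynomial (Fin m × Fin n) R :=
  ∑ e ∈ orb d, monomial e (1 : R)

lemma coeff_osum (d e : Fin m × Fin n →₀ ℕ) :
    coeff e (osum R d) = if e ∈ orb d then 1 else 0 := by
  rw [osum]
  rw [MvPolynomial.coeff_sum]
  rw [Finset.sum_congr rfl (fun e' _ => coeff_monomial e e' (1 : R))]
  exact Finset.sum_ite_eq' (orb d) e (fun _ => (1 : R))

lemma permRename_monomial (τ : Equiv.Perm (Fin n)) (e : Fin m × Fin n →₀ ℕ) (c : R) :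
    permRename m n τ (monomial e c) = monomial (act τ e) c := by
  show rename _ (monomial e c) = _
  rw [rename_monomial, act_eq_mapDomain]

lemma osum_invariant (d : Fin m × Fin n →₀ ℕ) : osum R d ∈ invSub R m n := by
  intro τ
  rw [osum, map_sum]
  rw [Finset.sum_congr rfl (fun e _ => permRename_monomial τ e (1 : R))]
  rw [show (∑ e ∈ orb d, (monomial (act τ e) (1 : R) : MvPolynomial (Fin m × Fin n) R)) =
      ∑ e ∈ Finset.image (act τ) (orb d), monomial e (1 : R) from
    (Finset.sum_image (s := orb d) (g := act τ)
      (f := fun e => (monomial e (1 : R) : MvPolynomial (Fin m × Fin n) R))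
      (fun x _ y _ h => act_injective τ h)).symm, orb_image]

lemma osum_comp {a : Fin m → ℕ} {d : Fin m × Fin n →₀ ℕ} (hd : wdeg m n d = a) :
    osum R d ∈ comp R m n a := by
  intro d₁ hd₁
  rw [MvPolynomial.mem_support_iff, coeff_osum] at hd₁
  have : d₁ ∈ orb d := by
    by_contra hc
    rw [if_neg hc] at hd₁
    exact hd₁ rfl
  obtain ⟨σ, rfl⟩ := mem_orb.1 this
  rw [wdeg_act, hd]

lemma projP_osum (hn : N ≤ n) (d : Fin m × Fin N →₀ ℕ) :
    projP R m n N (osum R (Finsupp.mapDomain (emb m hn) d)) = osum R d := by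
  apply MvPolynomial.ext
  intro e'
  rw [coeff_projP hn, coeff_osum, coeff_osum]
  have hiff : Finsupp.mapDomain (emb m hn) e' ∈ orb (Finsupp.mapDomain (emb m hn) d) ↔
      e' ∈ orb d := by
    rw [mem_orb, mem_orb]
    constructor
    · rintro ⟨σ, hσ⟩
      exact keyA hn d e' σ hσ
    · rintro ⟨τ, rfl⟩
      exact ⟨τ.extendDomain (finEquivSub hn), act_extendDomain hn τ d⟩
  rw [if_congr hiff rfl rfl]


lemma projP_mem_comp (hn : N ≤ n) {a : Fin m → ℕ} {p : MvPolynomial (Fin m × Fin n) R}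
    (hp : p ∈ comp R m n a) : projP R m n N p ∈ comp R m N a := by
  intro d' hd'
  rw [MvPolynomial.mem_support_iff, coeff_projP hn] at hd'
  have := hp _ (MvPolynomial.mem_support_iff.2 hd')
  rw [wdeg_mapDomain_emb hn] at this
  exact this

lemma projP_mem_inv (hn : N ≤ n) {p : MvPolynomial (Fin m × Fin n) R}
    (hp : p ∈ invSub R m n) : projP R m n N p ∈ invSub R m N := by
  intro τ
  apply MvPolynomial.ext
  intro d'
  have hd : act τ (act τ⁻¹ d') = d' := by
    rw [act_act, mul_inv_cancel, act_one]
  conv_lhs => rw [← hd]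
  rw [coeff_act_permRename, coeff_projP hn, coeff_projP hn]
  conv_rhs => rw [← hd, ← act_extendDomain hn]
  rw [coeff_invariant hp]

lemma projP_eq_zero (hn : N ≤ n) {a : Fin m → ℕ} {p : MvPolynomial (Fin m × Fin n) R}
    (hp1 : p ∈ invSub R m n) (hp2 : p ∈ comp R m n a) (hN : ∑ i, a i ≤ N)
    (h0 : projP R m n N p = 0) : p = 0 := by
  by_contra hne
  obtain ⟨d, hd⟩ := (MvPolynomial.support_nonempty.2 hne)
  have hda := hp2 d hd
  have hcard : (cols d).card ≤ N := le_trans (card_cols_le hda) hN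
  obtain ⟨σ, hσ⟩ := exists_push hn (cols d) hcard
  have hsmall : ↑(act σ d).support ⊆ Set.range (emb m hn) := by
    rintro ⟨i, j⟩ hx
    have hx' : d (i, σ⁻¹ j) ≠ 0 := by
      rw [← act_apply σ d i j]
      exact Finsupp.mem_support_iff.1 hx
    have hcol : σ⁻¹ j ∈ cols d := by
      rw [cols, Finset.mem_image]
      exact ⟨(i, σ⁻¹ j), Finsupp.mem_support_iff.2 hx', rfl⟩
    have hlt : (j : ℕ) < N := by
      have := hσ _ hcol
      rwa [Equiv.Perm.coe_inv, Equiv.apply_symm_apply] at this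
    exact ⟨(i, ⟨(j : ℕ), hlt⟩), Prod.ext rfl (Fin.ext rfl)⟩
  set d₀ := Finsupp.comapDomain (emb m hn) (act σ d) ((emb_inj hn).injOn) with hd₀
  have he : Finsupp.mapDomain (emb m hn) d₀ = act σ d :=
    Finsupp.mapDomain_comapDomain _ (emb_inj hn) _ hsmall
  have h1 : coeff d p ≠ 0 := MvPolynomial.mem_support_iff.1 hd
  apply h1
  rw [← coeff_invariant hp1 σ d, ← he, ← coeff_projP hn, h0, coeff_zero]

lemma suppRed {q : MvPolynomial (Fin m × Fin N) R} (hq : q ∈ invSub R m N)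
    (d : Fin m × Fin N →₀ ℕ) :
    (q - coeff d q • osum R d).support ⊆ q.support.erase d := by
  intro e he
  rw [MvPolynomial.mem_support_iff] at he
  have hco : coeff e (q - coeff d q • osum R d) =
      coeff e q - coeff d q * (if e ∈ orb d then 1 else 0) := by
    rw [coeff_sub, coeff_smul, coeff_osum, smul_eq_mul]
  by_cases horb : e ∈ orb d
  · exfalso
    obtain ⟨σ, rfl⟩ := mem_orb.1 horb
    rw [hco, if_pos horb, coeff_invariant hq] at he
    simp at he
  · rw [hco, if_neg horb, mul_zero, sub_zero] at he
    rw [Finset.mem_erase]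
    refine ⟨?_, MvPolynomial.mem_support_iff.2 he⟩
    rintro rfl
    exact horb (self_mem_orb e)

lemma projP_surj_aux (hn : N ≤ n) {a : Fin m → ℕ} :
    ∀ (k : ℕ) (q : MvPolynomial (Fin m × Fin N) R), q.support.card ≤ k →
      q ∈ invSub R m N → q ∈ comp R m N a →
      ∃ p, p ∈ invSub R m n ∧ p ∈ comp R m n a ∧ projP R m n N p = q := by
  intro k
  induction k with
  | zero =>
    intro q hcard _ _
    have : q = 0 := by
      rw [← MvPolynomial.support_eq_empty, ← Finset.card_eq_zero]
      omega
    exact ⟨0, (invSub R m n).zero_mem, (comp R m n a).zero_mem, by rw [this, map_zero]⟩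
  | succ k ih =>
    intro q hcard hq1 hq2
    by_cases hq0 : q = 0
    · exact ⟨0, (invSub R m n).zero_mem, (comp R m n a).zero_mem, by rw [hq0, map_zero]⟩
    obtain ⟨d, hd⟩ := MvPolynomial.support_nonempty.2 hq0
    have hda : wdeg m N d = a := hq2 d hd
    set c := coeff d q with hc
    set q' := q - c • osum R d with hq'
    have hq'1 : q' ∈ invSub R m N :=
      (invSub R m N).sub_mem hq1 ((invSub R m N).smul_mem _ (osum_invariant d))
    have hq'2 : q' ∈ comp R m N a :=
      (comp R m N a).sub_mem hq2 ((comp R m N a).smul_mem _ (osum_comp hda))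
    have hsupp : q'.support ⊆ q.support.erase d := by
      rw [hq', hc]; exact suppRed hq1 d
    have hcard' : q'.support.card ≤ k := by
      have h1 : (q.support.erase d).card < q.support.card := Finset.card_erase_lt_of_mem hd
      have h2 := Finset.card_le_card hsupp
      omega
    obtain ⟨p', hp'1, hp'2, hp'3⟩ := ih q' hcard' hq'1 hq'2
    refine ⟨p' + c • osum R (Finsupp.mapDomain (emb m hn) d),
      (invSub R m n).add_mem hp'1 ((invSub R m n).smul_mem _ (osum_invariant _)),
      (comp R m n a).add_mem hp'2 ((comp R m n a).smul_mem _
        (osum_comp (by rw [wdeg_mapDomain_emb hn, hda]))), ?_⟩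
    rw [map_add, hp'3]
    have : projP R m n N (c • osum R (Finsupp.mapDomain (emb m hn) d)) = c • osum R d := by
      rw [map_smul, projP_osum hn]
    rw [this, hq']
    ring


end Stmt18Aux

open Stmt18Aux in
/-- for n ≥ |a| = ∑ⱼ aⱼ, setting the variables x_i(j) with j > |a| to zero
induces an isomorphism A_R(n,m,a)^{Sₙ} ≅ A_R(|a|,m,a)^{S_{|a|}}. -/
theorem stmt18 (R : Type*) [CommRing R] (m n : ℕ) (a : Fin m → ℕ)
    (hn : ∑ i, a i ≤ n) :
    ∃ e : ↥(invSub R m n ⊓ comp R m n a) ≃ₗ[R]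
        ↥(invSub R m (∑ i, a i) ⊓ comp R m (∑ i, a i) a),
      ∀ p : ↥(invSub R m n ⊓ comp R m n a),
        (e p : MvPolynomial (Fin m × Fin (∑ i, a i)) R) =
          aeval (fun q : Fin m × Fin n =>
            if h : (q.2 : ℕ) < ∑ i, a i then X (q.1, ⟨q.2, h⟩) else 0)
            (p : MvPolynomial (Fin m × Fin n) R) := by
  set N := ∑ i, a i with hN
  have hmaps : ∀ x ∈ invSub R m n ⊓ comp R m n a,
      (projP R m n N).toLinearMap x ∈ invSub R m N ⊓ comp R m N a := by
    intro x hx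
    rw [Submodule.mem_inf] at hx ⊢
    exact ⟨projP_mem_inv hn hx.1, projP_mem_comp hn hx.2⟩
  set Φ := ((projP R m n N).toLinearMap).restrict hmaps with hΦ
  have hΦval : ∀ p : ↥(invSub R m n ⊓ comp R m n a),
      (Φ p : MvPolynomial (Fin m × Fin N) R) = projP R m n N (p : MvPolynomial (Fin m × Fin n) R) :=
    fun p => rfl
  have hinj : Function.Injective Φ := by
    intro p p' h
    have h1 : projP R m n N ((p : MvPolynomial (Fin m × Fin n) R) - (p' : MvPolynomial (Fin m × Fin n) R)) = 0 := by
      rw [map_sub]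
      have := congrArg (fun x : ↥(invSub R m N ⊓ comp R m N a) =>
        (x : MvPolynomial (Fin m × Fin N) R)) h
      simp only [hΦval] at this
      rw [this, sub_self]
    have hmem : (p : MvPolynomial (Fin m × Fin n) R) - (p' : MvPolynomial (Fin m × Fin n) R) ∈
        invSub R m n ⊓ comp R m n a := (invSub R m n ⊓ comp R m n a).sub_mem p.2 p'.2
    rw [Submodule.mem_inf] at hmem
    have h2 := projP_eq_zero hn hmem.1 hmem.2 (le_of_eq hN.symm) h1
    exact Subtype.ext (sub_eq_zero.1 h2)
  have hsurj : Function.Surjective Φ := by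
    intro q
    have hq := Submodule.mem_inf.1 q.2
    obtain ⟨p, hp1, hp2, hp3⟩ := projP_surj_aux hn (q : MvPolynomial (Fin m × Fin N) R).support.card
      (q : MvPolynomial (Fin m × Fin N) R) le_rfl hq.1 hq.2
    refine ⟨⟨p, Submodule.mem_inf.2 ⟨hp1, hp2⟩⟩, ?_⟩
    exact Subtype.ext (by rw [hΦval]; exact hp3)
  exact ⟨LinearEquiv.ofBijective Φ ⟨hinj, hsurj⟩, fun p => rfl⟩

end
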